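/- Let (R, m) be a Noetherian local ring, I an ideal of R containing a non-zerodivisor, x ∈ I a non-zerodivisor, and r ≥ 0 an integer with I^{r+1} = xI^r. Then for every integer j ≥ r one has ~(I^j) = I^j, and consequently ~(I^{m+1}) = x·~(I^m) for every m ≥ r. (In particular, with s(I) the smallest integer such that ~(I^n) = I^n for all n ≥ s(I), and ~r(I) the Ratliff-Rush reduction number, one gets s(I) ≤ r(I) and ~r(I) ≤ r(I).) -/

import Mathlib

/-- The Ratliff-Rush closure of the power `I^n`:  `⋃_{k≥0} (I^{n+k} : I^k)`. -/
noncomputable def rrPow {R : Type*} [CommRing R] (I : Ideal R) (n : ℕ) : Ideal R :=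
  ⨆ k : ℕ, (I ^ (n + k)).colon ((I ^ k : Ideal R) : Set R)

lemma pow_succ_of_red {R : Type*} [CommRing R] (I : Ideal R) (x : R) (r : ℕ)
    (hr : I ^ (r + 1) = Ideal.span {x} * I ^ r) :
    ∀ j : ℕ, r ≤ j → I ^ (j + 1) = Ideal.span {x} * I ^ j := by
  intro j hj
  obtain ⟨t, rfl⟩ := Nat.exists_eq_add_of_le hj
  calc I ^ (r + t + 1) = I ^ (r + 1) * I ^ t := by ring
    _ = Ideal.span {x} * I ^ r * I ^ t := by rw [hr]
    _ = Ideal.span {x} * I ^ (r + t) := by rw [mul_assoc, ← pow_add]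

lemma pow_add_of_red {R : Type*} [CommRing R] (I : Ideal R) (x : R) (r : ℕ)
    (hr : I ^ (r + 1) = Ideal.span {x} * I ^ r) :
    ∀ k : ℕ, ∀ j : ℕ, r ≤ j → I ^ (j + k) = Ideal.span {x ^ k} * I ^ j := by
  intro k
  induction k with
  | zero => intro j hj; simp
  | succ k ih =>
    intro j hj
    have h1 : I ^ (j + (k + 1)) = I ^ ((j + 1) + k) := by ring
    rw [h1, ih (j + 1) (le_trans hj (Nat.le_succ j)),
      pow_succ_of_red I x r hr j hj, ← mul_assoc,
      Ideal.span_singleton_mul_span_singleton, ← pow_succ]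

theorem stmt_6 (R : Type*) [CommRing R] [IsNoetherianRing R] [IsLocalRing R]
    (I : Ideal R) (hreg : ∃ y ∈ I, y ∈ nonZeroDivisors R)
    (x : R) (hxI : x ∈ I) (hx : x ∈ nonZeroDivisors R)
    (r : ℕ) (hr : I ^ (r + 1) = Ideal.span {x} * I ^ r) :
    (∀ j : ℕ, r ≤ j → rrPow I j = I ^ j) ∧
    (∀ m : ℕ, r ≤ m → rrPow I (m + 1) = Ideal.span {x} * rrPow I m) := by
  have key : ∀ j : ℕ, r ≤ j → rrPow I j = I ^ j := by
    intro j hj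
    apply le_antisymm
    · apply iSup_le
      intro k
      intro a ha
      have hax : a * x ^ k ∈ I ^ (j + k) := by
        have := Submodule.mem_colon.mp ha (x ^ k) (Ideal.pow_mem_pow hxI k)
        simpa [smul_eq_mul] using this
      rw [pow_add_of_red I x r hr k j hj] at hax
      obtain ⟨b, hb, hba⟩ := Ideal.mem_span_singleton_mul.mp hax
      have hxk : x ^ k ∈ nonZeroDivisors R := pow_mem hx k
      have hba' : b * x ^ k = a * x ^ k := by rw [mul_comm b]; exact hba
      have hb' : b = a := (mul_cancel_right_mem_nonZeroDivisors hxk).mp hba'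
      rwa [hb'] at hb
    · refine le_trans ?_ (le_iSup _ 0)
      intro a ha
      rw [Submodule.mem_colon]
      intro p hp
      rw [add_zero, smul_eq_mul]
      exact Ideal.mul_mem_right p _ ha
  refine ⟨key, fun m hm => ?_⟩
  rw [key (m + 1) (le_trans hm (Nat.le_succ m)), key m hm,
    pow_succ_of_red I x r hr m hm]
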